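/- Let G be a directed mixed graph over micro-variables X whose joint distribution P_X has positive density, and suppose the pair (G, P_X) is m-Markovian. Let P be a partition of X into finite sets with coarse graph co(G,P). Then (co(G,P), P_X) is m-Markovian: for all groups Y, Z ∈ P and every S ⊆ P ∖ {Y, Z}, if Y and Z are m-separated by S in co(G,P), then Y and Z are mutually conditionally independent given T = ∪_{W∈S} W; in particular they are then also pairwise conditionally independent given T. -/

import Mathlib

/-! ## Mixed graphs -/

/-- A mixed graph: directed, bidirected and undirected edges, no self-edges. -/
structure MixedGraph (V : Type) where
  dir : V → V → Prop
  bidir : V → V → Prop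
  undir : V → V → Prop
  bidir_symm : ∀ {a b}, bidir a b → bidir b a
  undir_symm : ∀ {a b}, undir a b → undir b a
  dir_irrefl : ∀ a, ¬ dir a a
  bidir_irrefl : ∀ a, ¬ bidir a a
  undir_irrefl : ∀ a, ¬ undir a a

namespace MixedGraph

variable {V I : Type}

/-- A directed mixed graph is a mixed graph without undirected edges. -/
def IsDMG (G : MixedGraph V) : Prop := ∀ a b, ¬ G.undir a b

/-- `a` and `b` lie in the same strongly connected component: there are directed
paths between them in both directions. -/
def Strongly (G : MixedGraph V) (a b : V) : Prop :=
  Relation.ReflTransGen G.dir a b ∧ Relation.ReflTransGen G.dir b a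

lemma Strongly.refl (G : MixedGraph V) (a : V) : G.Strongly a a :=
  ⟨Relation.ReflTransGen.refl, Relation.ReflTransGen.refl⟩

lemma Strongly.symm {G : MixedGraph V} {a b : V} (h : G.Strongly a b) : G.Strongly b a :=
  ⟨h.2, h.1⟩

/-- A graph is acyclic if it has no nontrivial directed closed walk. -/
def Acyclic (G : MixedGraph V) : Prop := ∀ a, ¬ Relation.TransGen G.dir a a

end MixedGraph

/-! ## Walks -/

/-- The four ways in which an edge can occur on a walk, as traversed from its
first node `a` to its second node `b`: `fw` is `a → b`, `bw` is `a ← b`,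
`bi` is `a ↔ b` and `un` is `a − b`. -/
inductive StepKind | fw | bw | bi | un
deriving DecidableEq

/-- A step of a walk: an ordered pair of nodes together with the kind of edge. -/
structure Step (V : Type) where
  a : V
  b : V
  k : StepKind

/-- The step is an actual edge of the graph `G`. -/
def Step.ok {V : Type} (G : MixedGraph V) (s : Step V) : Prop :=
  match s.k with
  | .fw => G.dir s.a s.b
  | .bw => G.dir s.b s.a
  | .bi => G.bidir s.a s.b
  | .un => G.undir s.a s.b

/-- The edge of the step has an arrowhead at its first node. -/
def Step.headA {V : Type} (s : Step V) : Prop := s.k = .bw ∨ s.k = .bi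

/-- The edge of the step has an arrowhead at its second node. -/
def Step.headB {V : Type} (s : Step V) : Prop := s.k = .fw ∨ s.k = .bi

namespace MixedGraph

variable {V I : Type}

/-- `IsWalk G x y L`: the list of steps `L` forms a walk from `x` to `y` in `G`. -/
inductive IsWalk (G : MixedGraph V) : V → V → List (Step V) → Prop
  | nil (a : V) : IsWalk G a a []
  | cons {c : V} (s : Step V) (L : List (Step V)) (hok : s.ok G)
      (hw : IsWalk G s.b c L) : IsWalk G s.a c (s :: L)

/-- `v` is a collider at junction `i` of the walk `L`: both edges adjacent to the
inner node `v` point into `v`. -/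
def ColliderAt (L : List (Step V)) (i : ℕ) (v : V) : Prop :=
  ∃ s t, L[i]? = some s ∧ L[i+1]? = some t ∧ s.b = v ∧ t.a = v ∧ s.headB ∧ t.headA

/-- `v` is a non-collider at junction `i` of the walk `L`. -/
def NonColliderAt (L : List (Step V)) (i : ℕ) (v : V) : Prop :=
  ∃ s t, L[i]? = some s ∧ L[i+1]? = some t ∧ s.b = v ∧ t.a = v ∧ ¬ (s.headB ∧ t.headA)

/-- The walk `L` from `x` to `y` is m-blocked by the node set `S`. -/
def MBlockedWalk (G : MixedGraph V) (S : Set V) (x y : V) (L : List (Step V)) : Prop :=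
  x ∈ S ∨ y ∈ S ∨
  (∃ i v, ColliderAt L i v ∧ ∀ d, Relation.ReflTransGen G.dir v d → d ∉ S) ∨
  (∃ i v, NonColliderAt L i v ∧ v ∈ S)

/-- The walk `L` from `x` to `y` is σ-blocked by the node set `S`. -/
def SigmaBlockedWalk (G : MixedGraph V) (S : Set V) (x y : V) (L : List (Step V)) : Prop :=
  x ∈ S ∨ y ∈ S ∨
  (∃ i v, ColliderAt L i v ∧ ∀ d, Relation.ReflTransGen G.dir v d → d ∉ S) ∨
  (∃ i s t, L[i]? = some s ∧ L[i+1]? = some t ∧ s.b = t.a ∧ ¬ (s.headB ∧ t.headA) ∧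
    s.b ∈ S ∧
    (((s.k = .bw ∨ s.k = .un) ∧ ¬ G.Strongly s.b s.a) ∨
     ((t.k = .fw ∨ t.k = .un) ∧ ¬ G.Strongly t.a t.b)))

/-- `x` and `y` are m-separated by `S` in `G`. -/
def MSep (G : MixedGraph V) (S : Set V) (x y : V) : Prop :=
  ∀ L, G.IsWalk x y L → G.MBlockedWalk S x y L

/-- `x` and `y` are σ-separated by `S` in `G`. -/
def SigmaSep (G : MixedGraph V) (S : Set V) (x y : V) : Prop :=
  ∀ L, G.IsWalk x y L → G.SigmaBlockedWalk S x y L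

/-! ## Acyclification -/

/-- The acyclification of a mixed graph. -/
def acy (G : MixedGraph V) : MixedGraph V where
  dir a b := (∃ c, G.dir a c ∧ G.Strongly c b) ∧ ¬ G.Strongly a b
  bidir a b := a ≠ b ∧ (G.Strongly a b ∨
    ∃ a' b', G.Strongly a a' ∧ G.Strongly b b' ∧ G.bidir a' b')
  undir a b := ¬ G.Strongly a b ∧ G.undir a b
  bidir_symm := by
    rintro a b ⟨hab, h | ⟨a', b', ha, hb, h⟩⟩
    · exact ⟨hab.symm, Or.inl h.symm⟩
    · exact ⟨hab.symm, Or.inr ⟨b', a', hb, ha, G.bidir_symm h⟩⟩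
  undir_symm := by
    rintro a b ⟨h1, h2⟩
    exact ⟨fun h => h1 h.symm, G.undir_symm h2⟩
  dir_irrefl := fun a h => h.2 (Strongly.refl G a)
  bidir_irrefl := fun a h => h.1 rfl
  undir_irrefl := fun a h => h.1 (Strongly.refl G a)

/-! ## Coarse graphs -/

/-- The coarse (quotient) graph of `G` with respect to the partition given by the
quotient map `q` onto the set of groups `I`. -/
def coarse (G : MixedGraph V) (q : V → I) : MixedGraph I where
  dir Y Z := Y ≠ Z ∧ ∃ y z, q y = Y ∧ q z = Z ∧ G.dir y z
  bidir Y Z := Y ≠ Z ∧ ∃ y z, q y = Y ∧ q z = Z ∧ G.bidir y z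
  undir Y Z := Y ≠ Z ∧ ∃ y z, q y = Y ∧ q z = Z ∧ G.undir y z
  bidir_symm := by
    rintro Y Z ⟨hne, y, z, hy, hz, h⟩
    exact ⟨hne.symm, z, y, hz, hy, G.bidir_symm h⟩
  undir_symm := by
    rintro Y Z ⟨hne, y, z, hy, hz, h⟩
    exact ⟨hne.symm, z, y, hz, hy, G.undir_symm h⟩
  dir_irrefl := fun Y h => h.1 rfl
  bidir_irrefl := fun Y h => h.1 rfl
  undir_irrefl := fun Y h => h.1 rfl

end MixedGraph

open MeasureTheory ProbabilityTheory

/-- The σ-algebra generated by the group `A` of the random variables `X v`. -/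
def genOf {Ω V : Type} [MeasurableSpace Ω] (X : V → Ω → ℝ) (A : Set V) :
    MeasurableSpace Ω :=
  ⨆ v ∈ A, MeasurableSpace.comap (X v) inferInstance

/-- Mutual conditional independence of the groups `Y` and `Z` of random variables
given the group `W`. -/
def GroupCI {Ω V : Type} [m : MeasurableSpace Ω] [StandardBorelSpace Ω]
    (μ : Measure Ω) [IsFiniteMeasure μ] (X : V → Ω → ℝ) (Y Z W : Set V) : Prop :=
  ∃ h : genOf X W ≤ m, ProbabilityTheory.CondIndep (genOf X W) (genOf X Y) (genOf X Z) h μ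

/-- The joint distribution of the variables `X v` has a positive density. -/
def HasPositiveDensity {Ω V : Type} [MeasurableSpace Ω] [Fintype V] (μ : Measure Ω)
    (X : V → Ω → ℝ) : Prop :=
  ∃ f : (V → ℝ) → ℝ, Measurable f ∧ (∀ x, 0 < f x) ∧
    Measure.map (fun ω v => X v ω) μ = volume.withDensity fun x => ENNReal.ofReal (f x)

open MeasureTheory ProbabilityTheory MixedGraph

variable {Ω V I : Type}

/-- `(G, μ)` is σ-Markovian: σ-separation implies conditional independence. -/
def SigmaMarkov [m : MeasurableSpace Ω] [StandardBorelSpace Ω] (G : MixedGraph V)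
    (μ : Measure Ω) [IsFiniteMeasure μ] (X : V → Ω → ℝ) : Prop :=
  ∀ (a b : V) (S : Set V), G.SigmaSep S a b → GroupCI μ X {a} {b} S

/-- `(G, μ)` is σ-faithful: conditional independence implies σ-separation. -/
def SigmaFaithful [m : MeasurableSpace Ω] [StandardBorelSpace Ω] (G : MixedGraph V)
    (μ : Measure Ω) [IsFiniteMeasure μ] (X : V → Ω → ℝ) : Prop :=
  ∀ (a b : V) (S : Set V), GroupCI μ X {a} {b} S → G.SigmaSep S a b

/-- `(G, μ)` is m-Markovian: m-separation implies conditional independence. -/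
def MMarkov [m : MeasurableSpace Ω] [StandardBorelSpace Ω] (G : MixedGraph V)
    (μ : Measure Ω) [IsFiniteMeasure μ] (X : V → Ω → ℝ) : Prop :=
  ∀ (a b : V) (S : Set V), G.MSep S a b → GroupCI μ X {a} {b} S

/-- The pair of the coarse graph `G.coarse q` and the distribution is σ-faithful on
the group level: mutual conditional independence of two groups given the union of
the groups in `S` implies their σ-separation by `S` in the coarse graph. -/
def SigmaFaithfulGrp [m : MeasurableSpace Ω] [StandardBorelSpace Ω] (G : MixedGraph V)
    (q : V → I) (μ : Measure Ω) [IsFiniteMeasure μ] (X : V → Ω → ℝ) : Prop :=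
  ∀ (Y Z : I) (S : Set I),
    GroupCI μ X (q ⁻¹' {Y}) (q ⁻¹' {Z}) (q ⁻¹' S) → (G.coarse q).SigmaSep S Y Z

/-! ## Auxiliary graph lemmas -/

namespace CoarseAux

open MixedGraph

open scoped Classical

variable {V I : Type}

/-- Collider pair of steps. -/
def collP (s t : Step V) : Prop := s.headB ∧ t.headA

/-- The junction relation for "open" walks: colliders have a descendant in `C`,
non-colliders avoid `T`. -/
def Rel (G : MixedGraph V) (T C : Set V) (s t : Step V) : Prop :=
  (collP s t → ∃ d, Relation.ReflTransGen G.dir s.b d ∧ d ∈ C) ∧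
  (¬ collP s t → s.b ∉ T)

/-- A walk is `(T, C)`-open. -/
def OpenW (G : MixedGraph V) (T C : Set V) (L : List (Step V)) : Prop :=
  List.Chain' (Rel G T C) L

lemma isWalk_append {G : MixedGraph V} {a b c : V} {L₁ L₂ : List (Step V)}
    (h₁ : G.IsWalk a b L₁) (h₂ : G.IsWalk b c L₂) : G.IsWalk a c (L₁ ++ L₂) := by
  induction h₁ with
  | nil => simpa using h₂
  | cons s L hok hw ih => exact IsWalk.cons s _ hok (ih h₂)

lemma isWalk_append_split {G : MixedGraph V} {a c : V} {L₁ L₂ : List (Step V)}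
    (h : G.IsWalk a c (L₁ ++ L₂)) : ∃ b, G.IsWalk a b L₁ ∧ G.IsWalk b c L₂ := by
  induction L₁ generalizing a with
  | nil => exact ⟨a, IsWalk.nil a, by simpa using h⟩
  | cons s L ih =>
    cases h with
    | cons _ _ hok hw =>
      obtain ⟨b, h1, h2⟩ := ih hw
      exact ⟨b, IsWalk.cons s _ hok h1, h2⟩

lemma isWalk_nil_eq {G : MixedGraph V} {a b : V} (h : G.IsWalk a b ([] : List (Step V))) : a = b := by
  cases h; rfl

lemma isWalk_cons_start {G : MixedGraph V} {a b : V} {s : Step V} {L : List (Step V)}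
    (h : G.IsWalk a b (s :: L)) : a = s.a := by cases h; rfl

lemma isWalk_cons_rest {G : MixedGraph V} {a b : V} {s : Step V} {L : List (Step V)}
    (h : G.IsWalk a b (s :: L)) : s.ok G ∧ G.IsWalk s.b b L := by
  cases h with | cons _ _ hok hw => exact ⟨hok, hw⟩

lemma isWalk_chain {G : MixedGraph V} {a b : V} {L : List (Step V)}
    (h : G.IsWalk a b L) : List.Chain' (fun s t => s.b = t.a) L := by
  induction h with
  | nil => exact List.isChain_nil
  | cons s L hok hw ih =>
    cases L with
    | nil => exact List.isChain_singleton _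
    | cons t L' =>
      refine List.IsChain.cons_cons ?_ ih
      exact isWalk_cons_start hw

lemma isWalk_getLast {G : MixedGraph V} {a b : V} {L : List (Step V)}
    (h : G.IsWalk a b L) : ∀ p ∈ L.getLast?, p.b = b := by
  induction h with
  | nil => simp
  | cons s L hok hw ih =>
    cases L with
    | nil =>
      intro p hp
      simp only [List.getLast?_singleton, Option.mem_some_iff] at hp
      subst hp
      exact isWalk_nil_eq hw
    | cons t L' =>
      intro p hp
      exact ih p (by simpa [List.getLast?_cons_cons] using hp)

lemma chain'_of_index {α : Type*} {R : α → α → Prop} {L : List α}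
    (h : ∀ (i : ℕ) (s t : α), L[i]? = some s → L[i+1]? = some t → R s t) :
    List.Chain' R L := by
  induction L with
  | nil => exact List.isChain_nil
  | cons s L ih =>
    cases L with
    | nil => exact List.isChain_singleton _
    | cons t L' =>
      refine List.IsChain.cons_cons (h 0 s t rfl (by simp)) (ih ?_)
      intro i x y hx hy
      exact h (i+1) x y (by simpa using hx) (by simpa using hy)

lemma index_of_chain' {α : Type*} {R : α → α → Prop} {L : List α}
    (h : List.Chain' R L) {i : ℕ} {s t : α}
    (hs : L[i]? = some s) (ht : L[i+1]? = some t) : R s t := by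
  induction L generalizing i with
  | nil => simp at hs
  | cons x L ih =>
    cases L with
    | nil =>
      cases i with
      | zero => simp at ht
      | succ j => simp at hs
    | cons y L' =>
      obtain ⟨hxy, hch⟩ := List.isChain_cons_cons.mp h
      cases i with
      | zero =>
        simp only [List.getElem?_cons_zero, Option.some.injEq] at hs
        simp only [List.getElem?_cons_succ, List.getElem?_cons_zero,
          Option.some.injEq] at ht
        subst hs; subst ht; exact hxy
      | succ j => exact ih hch (by simpa using hs) (by simpa using ht)

lemma isWalk_adj {G : MixedGraph V} {a b : V} {L : List (Step V)}
    (h : G.IsWalk a b L) {i : ℕ} {s t : Step V}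
    (hs : L[i]? = some s) (ht : L[i+1]? = some t) : s.b = t.a :=
  index_of_chain' (isWalk_chain h) hs ht

end CoarseAux
namespace CoarseAux

open MixedGraph

variable {V I : Type}

/-- Boolean collider test. -/
def collB (s t : Step V) : Bool :=
  (s.k == .fw || s.k == .bi) && (t.k == .bw || t.k == .bi)

lemma collB_iff {s t : Step V} : collB s t = true ↔ collP s t := by
  cases hs : s.k <;> cases ht : t.k <;>
    simp [collB, collP, Step.headB, Step.headA, hs, ht]

/-- Number of collider junctions of a walk. -/
def cnt : List (Step V) → ℕ
  | [] => 0
  | [_] => 0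
  | s :: t :: L => (if collB s t then 1 else 0) + cnt (t :: L)

lemma cnt_cons (s : Step V) (L : List (Step V)) :
    cnt (s :: L) = (Option.elim L.head? 0 fun t => if collB s t then 1 else 0) + cnt L := by
  cases L with
  | nil => simp [cnt]
  | cons t L' => simp [cnt]

lemma cnt_append_cons (A : List (Step V)) (x : Step V) (B : List (Step V)) :
    cnt (A ++ x :: B) = cnt (A ++ [x]) + cnt (x :: B) := by
  induction A with
  | nil => simp [cnt_cons, cnt]
  | cons a A ih =>
    have hh : (A ++ x :: B).head? = (A ++ [x]).head? := by
      cases A <;> simp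
    simp only [List.cons_append, cnt_cons, hh, ih]
    omega

lemma cnt_cons_eq_zero {s : Step V} {P : List (Step V)}
    (hP : ∀ p ∈ P, ¬ p.headA) : cnt (s :: P) = 0 := by
  induction P generalizing s with
  | nil => simp [cnt]
  | cons p P ih =>
    have h1 : collB s p = false := by
      rw [Bool.eq_false_iff]
      intro hc
      exact hP p (by simp) (collB_iff.mp hc).2
    simp only [cnt, h1]
    simpa using ih (fun x hx => hP x (by simp [hx]))

lemma cnt_append_eq {P M : List (Step V)}
    (hP : ∀ p ∈ P, ¬ p.headB) : cnt (P ++ M) = cnt M := by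
  induction P with
  | nil => simp
  | cons p P ih =>
    have h0 : ∀ t, collB p t = false := by
      intro t
      rw [Bool.eq_false_iff]
      intro hc
      exact hP p (by simp) (collB_iff.mp hc).1
    rw [List.cons_append, cnt_cons]
    have : (Option.elim (P ++ M).head? 0 fun t => if collB p t then 1 else 0) = 0 := by
      cases (P ++ M).head? <;> simp [h0]
    rw [this, ih (fun x hx => hP x (by simp [hx]))]
    omega

/-- Forward directed walk along a reachability chain. -/
lemma fwSteps {G : MixedGraph V} {u v : V} (h : Relation.ReflTransGen G.dir u v) :
    ∃ P : List (Step V), G.IsWalk u v P ∧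
      ∀ p ∈ P, p.k = .fw ∧ Relation.ReflTransGen G.dir u p.a ∧
        Relation.ReflTransGen G.dir u p.b := by
  induction h using Relation.ReflTransGen.head_induction_on with
  | refl => exact ⟨[], IsWalk.nil v, by simp⟩
  | head huw hwv ih =>
    rename_i u' w
    obtain ⟨P, hP, hprop⟩ := ih
    refine ⟨⟨u', w, .fw⟩ :: P, IsWalk.cons _ _ (show Step.ok G ⟨u', w, .fw⟩ from huw) hP, ?_⟩
    intro p hp
    rcases List.mem_cons.mp hp with rfl | hp
    · exact ⟨rfl, Relation.ReflTransGen.refl, Relation.ReflTransGen.single huw⟩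
    · obtain ⟨h1, h2, h3⟩ := hprop p hp
      exact ⟨h1, (Relation.ReflTransGen.single huw).trans h2,
        (Relation.ReflTransGen.single huw).trans h3⟩

/-- Backward directed walk along a reachability chain. -/
lemma bwSteps {G : MixedGraph V} {u v : V} (h : Relation.ReflTransGen G.dir u v) :
    ∃ P : List (Step V), G.IsWalk v u P ∧
      ∀ p ∈ P, p.k = .bw ∧ Relation.ReflTransGen G.dir u p.a ∧
        Relation.ReflTransGen G.dir u p.b := by
  induction h using Relation.ReflTransGen.head_induction_on with
  | refl => exact ⟨[], IsWalk.nil v, by simp⟩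
  | head huw hwv ih =>
    rename_i u' w
    obtain ⟨P, hP, hprop⟩ := ih
    refine ⟨P ++ [⟨w, u', .bw⟩], isWalk_append hP (IsWalk.cons _ _ (show Step.ok G ⟨w, u', .bw⟩ from huw) (IsWalk.nil u')), ?_⟩
    intro p hp
    rcases List.mem_append.mp hp with hp | hp
    · obtain ⟨h1, h2, h3⟩ := hprop p hp
      exact ⟨h1, (Relation.ReflTransGen.single huw).trans h2,
        (Relation.ReflTransGen.single huw).trans h3⟩
    · simp only [List.mem_singleton] at hp
      subst hp
      exact ⟨rfl, Relation.ReflTransGen.single huw, Relation.ReflTransGen.refl⟩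

end CoarseAux
namespace CoarseAux

open MixedGraph

open scoped Classical

/-- Projection of a micro step. -/
def projStep (q : V → I) (s : Step V) : Step I := ⟨q s.a, q s.b, s.k⟩

/-- Projection of a micro walk to the coarse graph. -/
noncomputable def proj (q : V → I) : List (Step V) → List (Step I)
  | [] => []
  | s :: L => if q s.a = q s.b then proj q L else projStep q s :: proj q L

variable {q : V → I}

lemma proj_nil : proj q ([] : List (Step V)) = [] := rfl

lemma proj_cons (s : Step V) (L : List (Step V)) :
    proj q (s :: L) = if q s.a = q s.b then proj q L else projStep q s :: proj q L := rfl

lemma proj_nil_qeq {G : MixedGraph V} {a b : V} {L : List (Step V)}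
    (h : G.IsWalk a b L) (hp : proj q L = []) : q a = q b := by
  induction h with
  | nil => rfl
  | cons s L hok hw ih =>
    rw [proj_cons] at hp
    by_cases he : q s.a = q s.b
    · rw [if_pos he] at hp
      exact he.trans (ih hp)
    · rw [if_neg he] at hp
      simp at hp

lemma projStep_ok {G : MixedGraph V} {s : Step V} (hne : q s.a ≠ q s.b)
    (hok : s.ok G) : (projStep q s).ok (G.coarse q) := by
  cases hk : s.k with
  | fw =>
    simp only [Step.ok, projStep, hk] at hok ⊢
    exact ⟨hne, s.a, s.b, rfl, rfl, hok⟩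
  | bw =>
    simp only [Step.ok, projStep, hk] at hok ⊢
    exact ⟨Ne.symm hne, s.b, s.a, rfl, rfl, hok⟩
  | bi =>
    simp only [Step.ok, projStep, hk] at hok ⊢
    exact ⟨hne, s.a, s.b, rfl, rfl, hok⟩
  | un =>
    simp only [Step.ok, projStep, hk] at hok ⊢
    exact ⟨hne, s.a, s.b, rfl, rfl, hok⟩

lemma isWalk_proj {G : MixedGraph V} {a b : V} {L : List (Step V)}
    (h : G.IsWalk a b L) : (G.coarse q).IsWalk (q a) (q b) (proj q L) := by
  induction h with
  | nil => exact IsWalk.nil _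
  | cons s L hok hw ih =>
    rw [proj_cons]
    by_cases he : q s.a = q s.b
    · rw [if_pos he, he]
      exact ih
    · rw [if_neg he]
      exact IsWalk.cons _ _ (projStep_ok he hok) ih

lemma rtg_proj {G : MixedGraph V} {u v : V}
    (h : Relation.ReflTransGen G.dir u v) :
    Relation.ReflTransGen (G.coarse q).dir (q u) (q v) := by
  induction h with
  | refl => exact Relation.ReflTransGen.refl
  | @tail w x _ hd ih =>
    by_cases he : q w = q x
    · exact he ▸ ih
    · exact ih.tail ⟨he, w, x, rfl, rfl, hd⟩

lemma projStep_headA {s : Step V} : (projStep q s).headA ↔ s.headA := Iff.rfl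

lemma projStep_headB {s : Step V} : (projStep q s).headB ↔ s.headB := Iff.rfl

/-- Goodness of a coarse junction. -/
def CGood (G : MixedGraph V) (q : V → I) (S : Set I) (σ τ : Step I) : Prop :=
  (collP σ τ → ∃ D, Relation.ReflTransGen (G.coarse q).dir σ.b D ∧ D ∈ S) ∧
  (¬ collP σ τ → σ.b ∉ S)

/-- The relation `Rel` with an optional second step. -/
def RelOpt (G : MixedGraph V) (T : Set V) (s : Step V) (L : List (Step V)) : Prop :=
  ∀ u ∈ L.head?, Rel G T T s u

/-- Head invariant for the projection lemma. -/
def HI (G : MixedGraph V) (q : V → I) (T : Set V) (L : List (Step V)) (a : V) : Prop :=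
  ∀ τ ∈ (proj q L).head?,
    τ.a = q a ∧
    (¬ τ.headA → ∀ s : Step V, s.b = a → RelOpt G T s L → ∃ w, q w = q a ∧ w ∉ T) ∧
    (τ.headA → ∀ s : Step V, s.b = a → s.headB → RelOpt G T s L →
      ∃ d, Relation.ReflTransGen G.dir a d ∧ d ∈ T)

theorem proj_good {G : MixedGraph V} (hDMG : G.IsDMG) {S : Set I} {T : Set V}
    (hT : T = q ⁻¹' S) {L : List (Step V)} {a b : V}
    (hw : G.IsWalk a b L) (hop : OpenW G T T L) :
    List.Chain' (CGood G q S) (proj q L) ∧ HI G q T L a := by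
  induction hw with
  | nil => exact ⟨by simp [proj_nil, List.Chain'], by intro τ hτ; simp [proj_nil] at hτ⟩
  | cons s L hok hw ih =>
    obtain ⟨hlink, hop'⟩ := List.isChain_cons.mp hop
    obtain ⟨ihC, ihH⟩ := ih hop'
    by_cases he : q s.a = q s.b
    · -- step inside a group
      rw [proj_cons, if_pos he]
      refine ⟨ihC, ?_⟩
      intro τ hτ
      rw [proj_cons, if_pos he] at hτ
      obtain ⟨hτa, hnc, hc⟩ := ihH τ hτ
      have hLne : L ≠ [] := by
        intro hL
        subst hL
        simp [proj] at hτ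
      obtain ⟨u, hu⟩ : ∃ u, L.head? = some u := by
        cases L with
        | nil => exact absurd rfl hLne
        | cons x L' => exact ⟨x, rfl⟩
      refine ⟨hτa.trans he.symm, ?_, ?_⟩
      · intro hτna s' hs'b hrel
        have hRel : Rel G T T s' s := hrel s rfl
        by_cases hcoll : collP s' s
        · obtain ⟨w, hw1, hw2⟩ := hnc hτna s rfl (fun u hu => hlink u hu)
          exact ⟨w, hw1.trans he.symm, hw2⟩
        · exact ⟨s.a, rfl, hs'b ▸ hRel.2 hcoll⟩
      · intro hτA s' hs'b hs'B hrel
        have hRel : Rel G T T s' s := hrel s rfl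
        by_cases hsA : s.headA
        · obtain ⟨d, hd1, hd2⟩ := hRel.1 ⟨hs'B, hsA⟩
          exact ⟨d, hs'b ▸ hd1, hd2⟩
        · have hk : s.k = .fw := by
            rcases hkk : s.k with _ | _ | _ | _
            · rfl
            · exact absurd (Or.inl hkk) hsA
            · exact absurd (Or.inr hkk) hsA
            · rw [Step.ok, hkk] at hok
              exact absurd hok (hDMG _ _)
          have hdir : G.dir s.a s.b := by rw [Step.ok, hk] at hok; exact hok
          obtain ⟨d, hd1, hd2⟩ := hc hτA s rfl (Or.inl hk) (fun u hu => hlink u hu)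
          exact ⟨d, (Relation.ReflTransGen.single hdir).trans hd1, hd2⟩
    · -- step between groups
      rw [proj_cons, if_neg he]
      constructor
      · refine List.isChain_cons.mpr ⟨?_, ihC⟩
        intro τ hτ
        obtain ⟨hτa, hnc, hc⟩ := ihH τ hτ
        have hLne : L ≠ [] := by
          intro hL
          subst hL
          simp [proj_nil] at hτ
        obtain ⟨u, hu⟩ : ∃ u, L.head? = some u := by
          cases L with
          | nil => exact absurd rfl hLne
          | cons x L' => exact ⟨x, rfl⟩
        have hRel_su : Rel G T T s u := hlink u hu
        constructor
        · rintro ⟨hB, hA⟩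
          have hsB : s.headB := projStep_headB.mp hB
          obtain ⟨d, hd1, hd2⟩ := hc hA s rfl hsB (fun u hu => hlink u hu)
          refine ⟨q d, rtg_proj hd1, ?_⟩
          rw [hT] at hd2
          exact hd2
        · intro hncoll
          by_cases hsB : s.headB
          · have hτna : ¬ τ.headA := by
              intro hA
              exact hncoll ⟨projStep_headB.mpr hsB, hA⟩
            obtain ⟨w, hw1, hw2⟩ := hnc hτna s rfl (fun u hu => hlink u hu)
            rw [hT] at hw2
            intro hin
            exact hw2 (by rw [Set.mem_preimage, hw1]; exact hin)
          · have : s.b ∉ T := hRel_su.2 (fun hc' => hsB hc'.1)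
            rw [hT] at this
            exact this
      · intro τ₀ hτ₀
        rw [proj_cons, if_neg he] at hτ₀
        simp only [List.head?_cons, Option.mem_some_iff] at hτ₀
        subst hτ₀
        refine ⟨rfl, ?_, ?_⟩
        · intro hτna s' hs'b hrel
          have hRel : Rel G T T s' s := hrel s rfl
          have hsA : ¬ s.headA := fun h => hτna (projStep_headA.mpr h)
          exact ⟨s.a, rfl, hs'b ▸ hRel.2 (fun hc' => hsA hc'.2)⟩
        · intro hτA s' hs'b hs'B hrel
          have hRel : Rel G T T s' s := hrel s rfl
          obtain ⟨d, hd1, hd2⟩ := hRel.1 ⟨hs'B, projStep_headA.mp hτA⟩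
          exact ⟨d, hs'b ▸ hd1, hd2⟩

end CoarseAux
namespace CoarseAux

open MixedGraph

variable {q : V → I}

lemma one_le_cnt {L : List (Step V)} {i : ℕ} {s t : Step V}
    (hs : L[i]? = some s) (ht : L[i+1]? = some t)
    (h1 : collB s t = true) : 1 ≤ cnt L := by
  induction L generalizing i with
  | nil => simp at hs
  | cons x L' ih =>
    cases i with
    | zero =>
      simp only [List.getElem?_cons_zero, Option.some.injEq] at hs
      cases L' with
      | nil => simp at ht
      | cons y L'' =>
        simp only [List.getElem?_cons_succ, List.getElem?_cons_zero,
          Option.some.injEq] at ht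
        subst hs; subst ht
        simp [cnt, h1]
    | succ j =>
      have := ih (by simpa using hs) (by simpa using ht)
      calc 1 ≤ cnt L' := this
        _ ≤ cnt (x :: L') := by rw [cnt_cons]; omega

/-- If `Y` is not in `S` and `Y` and `Z` are m-separated by `S`, then `Y ≠ Z`. -/
lemma msep_ne {G : MixedGraph I} {S : Set I} {Y Z : I} (h : G.MSep S Y Z)
    (hY : Y ∉ S) : Y ≠ Z := by
  intro hYZ
  subst hYZ
  have := h [] (IsWalk.nil Y)
  rcases this with h | h | ⟨i, v, ⟨s, t, hs, _⟩, _⟩ | ⟨i, v, ⟨s, t, hs, _⟩, _⟩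
  · exact hY h
  · exact hY h
  · simp at hs
  · simp at hs

/-- A `T`-open micro walk between different groups contradicts coarse
m-separation. -/
theorem micro_contra {G : MixedGraph V} (hDMG : G.IsDMG) {S : Set I} {Y Z : I}
    (hMS : (G.coarse q).MSep S Y Z) (hY : Y ∉ S) (hZ : Z ∉ S)
    {y z : V} (hy : q y = Y) (hz : q z = Z) {L : List (Step V)}
    (hw : G.IsWalk y z L) (hop : OpenW G (q ⁻¹' S) (q ⁻¹' S) L) : False := by
  have hne : Y ≠ Z := msep_ne hMS hY
  obtain ⟨hC, hH⟩ := proj_good (q := q) hDMG rfl hw hop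
  have hwM : (G.coarse q).IsWalk Y Z (proj q L) := by
    rw [← hy, ← hz]
    exact isWalk_proj hw
  have hB := hMS (proj q L) hwM
  rcases hB with h | h | ⟨i, v, ⟨σ, τ, hσ, hτ, hσb, hτa, hσh, hτh⟩, hnd⟩ |
    ⟨i, v, ⟨σ, τ, hσ, hτ, hσb, hτa, hnch⟩, hvS⟩
  · exact hY h
  · exact hZ h
  · obtain ⟨D, hD1, hD2⟩ := (index_of_chain' hC hσ hτ).1 ⟨hσh, hτh⟩
    exact hnd D (hσb ▸ hD1) hD2
  · exact (index_of_chain' hC hσ hτ).2 hnch (hσb ▸ hvS)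

/-- Rerouting: from a `(T, C)`-open walk between two groups, obtain a
`(T, T)`-open walk between the same groups. -/
theorem reroute {G : MixedGraph V} {T C Yg Zg : Set V}
    (hC : C ⊆ T ∪ Yg ∪ Zg) :
    ∀ (n : ℕ) (L : List (Step V)) (a b : V), cnt L ≤ n → G.IsWalk a b L →
      a ∈ Yg → b ∈ Zg → OpenW G T C L →
      ∃ (a' b' : V) (L' : List (Step V)), a' ∈ Yg ∧ b' ∈ Zg ∧
        G.IsWalk a' b' L' ∧ OpenW G T T L' := by
  intro n
  induction n with
  | zero =>
    intro L a b hcnt hw ha hb hop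
    -- with no colliders, every `(T,C)`-open walk is `(T,T)`-open
    refine ⟨a, b, L, ha, hb, hw, ?_⟩
    have : ∀ (i : ℕ) (s t : Step V), L[i]? = some s → L[i+1]? = some t →
        Rel G T T s t := by
      intro i s t hs ht
      have hrel := index_of_chain' hop hs ht
      constructor
      · intro hcoll
        exfalso
        have h1 : collB s t = true := collB_iff.mpr hcoll
        have := one_le_cnt hs ht h1
        omega
      · exact hrel.2
    exact chain'_of_index this
  | succ n ihn =>
    intro L a b hcnt hw ha hb hop
    by_cases hOT : OpenW G T T L
    · exact ⟨a, b, L, ha, hb, hw, hOT⟩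
    · -- find a bad junction
      obtain ⟨L₁, s, t, L₂, hLeq, hRst, hnRst⟩ :
          ∃ L₁ s t L₂, L = L₁ ++ s :: t :: L₂ ∧ Rel G T C s t ∧ ¬ Rel G T T s t := by
        clear hcnt hw ihn
        induction L with
        | nil => exact absurd List.isChain_nil hOT
        | cons x L' ih =>
          cases L' with
          | nil => exact absurd (List.isChain_singleton x) hOT
          | cons y L'' =>
            obtain ⟨hxy, hop'⟩ := List.isChain_cons_cons.mp hop
            by_cases hxyT : Rel G T T x y
            · have hOT' : ¬ OpenW G T T (y :: L'') := by
                intro hc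
                exact hOT (List.isChain_cons_cons.mpr ⟨hxyT, hc⟩)
              obtain ⟨L₁, s, t, L₂, hLeq, h1, h2⟩ := ih hop' hOT'
              exact ⟨x :: L₁, s, t, L₂, by rw [hLeq]; rfl, h1, h2⟩
            · exact ⟨[], x, y, L'', rfl, hxy, hxyT⟩
      -- analyze the bad junction
      have hcoll : collP s t ∧ ¬ ∃ d, Relation.ReflTransGen G.dir s.b d ∧ d ∈ T := by
        by_cases hco : collP s t
        · refine ⟨hco, ?_⟩
          intro hex
          exact hnRst ⟨fun _ => hex, hRst.2⟩
        · exact absurd ⟨fun hco' => absurd hco' hco, hRst.2⟩ hnRst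
      obtain ⟨hco, hnoT⟩ := hcoll
      have hnoT' : ∀ x, Relation.ReflTransGen G.dir s.b x → x ∉ T :=
        fun x hx hxT => hnoT ⟨x, hx, hxT⟩
      obtain ⟨d, hd1, hd2⟩ := hRst.1 hco
      have hdYZ : d ∈ Yg ∪ Zg := by
        rcases hC hd2 with (h | h) | h
        · exact absurd h (hnoT' d hd1)
        · exact Or.inl h
        · exact Or.inr h
      subst hLeq
      obtain ⟨c, hw1, hw2⟩ := isWalk_append_split hw
      have hcs : c = s.a := isWalk_cons_start hw2
      obtain ⟨hsok, hw3⟩ := isWalk_cons_rest hw2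
      have hta : t.a = s.b := (isWalk_cons_start hw3).symm
      have hchain := List.isChain_append.mp hop
      have hch1 : List.Chain' (Rel G T C) L₁ := hchain.1
      have hch2 : List.Chain' (Rel G T C) (s :: t :: L₂) := hchain.2.1
      have hbd : ∀ x ∈ L₁.getLast?, Rel G T C x s := by
        intro x hx
        have := hchain.2.2 x hx
        simpa using this
      have hcnt_split : cnt (L₁ ++ s :: t :: L₂) = cnt (L₁ ++ [s]) + cnt (s :: t :: L₂) :=
        cnt_append_cons L₁ s (t :: L₂)
      have hcnt_st : cnt (s :: t :: L₂) = 1 + cnt (t :: L₂) := by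
        simp [cnt, collB_iff.mpr hco]
      rcases hdYZ with hdY | hdZ
      · -- reroute towards the `Y`-side
        obtain ⟨P, hPw, hPprop⟩ := bwSteps hd1
        refine ihn (P ++ t :: L₂) d b ?_ ?_ hdY hb ?_
        · have : cnt (P ++ t :: L₂) = cnt (t :: L₂) := by
            refine cnt_append_eq ?_
            intro p hp
            have := (hPprop p hp).1
            intro hB
            rcases hB with h | h <;> rw [this] at h <;> exact StepKind.noConfusion h
          omega
        · exact isWalk_append hPw hw3
        · refine List.isChain_append.mpr ⟨?_, (List.isChain_cons_cons.mp hch2).2, ?_⟩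
          · refine List.Pairwise.isChain ?_
            refine List.pairwise_of_forall_mem_list ?_
            intro p hp p' hp'
            have hk := (hPprop p hp).1
            have hBfalse : ¬ p.headB := by
              intro hB
              rcases hB with h | h <;> rw [hk] at h <;> exact StepKind.noConfusion h
            exact ⟨fun hcp => absurd hcp.1 hBfalse,
              fun _ => hnoT' p.b (hPprop p hp).2.2⟩
          · intro x hx u hu
            simp only [List.head?_cons, Option.mem_some_iff] at hu
            subst hu
            have hk := (hPprop x (List.mem_of_mem_getLast? hx)).1
            have hBfalse : ¬ x.headB := by
              intro hB
              rcases hB with h | h <;> rw [hk] at h <;> exact StepKind.noConfusion h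
            have hxb : x.b = s.b := isWalk_getLast hPw x hx
            exact ⟨fun hcp => absurd hcp.1 hBfalse,
              fun _ => hxb ▸ hnoT' s.b Relation.ReflTransGen.refl⟩
      · -- reroute towards the `Z`-side
        obtain ⟨P, hPw, hPprop⟩ := fwSteps hd1
        refine ihn (L₁ ++ s :: P) a d ?_ ?_ ha hdZ ?_
        · have : cnt (L₁ ++ s :: P) = cnt (L₁ ++ [s]) + cnt (s :: P) :=
            cnt_append_cons L₁ s P
          have h0 : cnt (s :: P) = 0 := by
            refine cnt_cons_eq_zero ?_
            intro p hp
            have := (hPprop p hp).1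
            intro hA
            rcases hA with h | h <;> rw [this] at h <;> exact StepKind.noConfusion h
          omega
        · exact isWalk_append hw1 (hcs ▸ IsWalk.cons s P hsok hPw)
        · refine List.isChain_append.mpr ⟨hch1, ?_, ?_⟩
          · refine List.isChain_cons.mpr ⟨?_, ?_⟩
            · intro p₀ hp₀
              have hk := (hPprop p₀ (List.mem_of_mem_head? hp₀)).1
              have hAfalse : ¬ p₀.headA := by
                intro hA
                rcases hA with h | h <;> rw [hk] at h <;> exact StepKind.noConfusion h
              exact ⟨fun hcp => absurd hcp.2 hAfalse,
                fun _ => hnoT' s.b Relation.ReflTransGen.refl⟩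
            · refine List.Pairwise.isChain ?_
              refine List.pairwise_of_forall_mem_list ?_
              intro p hp p' hp'
              have hk := (hPprop p' hp').1
              have hAfalse : ¬ p'.headA := by
                intro hA
                rcases hA with h | h <;> rw [hk] at h <;> exact StepKind.noConfusion h
              exact ⟨fun hcp => absurd hcp.2 hAfalse,
                fun _ => hnoT' p.b (hPprop p hp).2.2⟩
          · intro x hx u hu
            simp only [List.head?_cons, Option.mem_some_iff] at hu
            subst hu
            have := hbd x hx
            exact ⟨this.1, this.2⟩

end CoarseAux
namespace CoarseAux

open MixedGraph

variable {q : V → I}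

/-- The key micro-level separation: coarse m-separation of the groups `Y` and `Z`
by `S` yields micro m-separation of `y` and `z` by the union of the groups in `S`
together with arbitrary parts of the groups of `y` and `z`. -/
theorem micro_msep {G : MixedGraph V} (hDMG : G.IsDMG) {S : Set I} {Y Z : I}
    (hMS : (G.coarse q).MSep S Y Z) (hY : Y ∉ S) (hZ : Z ∉ S)
    {y z : V} (hy : q y = Y) (hz : q z = Z) {Y' Z' : Set V}
    (hY' : Y' ⊆ q ⁻¹' {Y}) (hZ' : Z' ⊆ q ⁻¹' {Z}) :
    G.MSep (q ⁻¹' S ∪ Y' ∪ Z') y z := by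
  intro L hw
  by_contra hnb
  set T : Set V := q ⁻¹' S with hT
  set C : Set V := q ⁻¹' S ∪ Y' ∪ Z' with hCdef
  have hcol : ∀ i v, ColliderAt L i v →
      ∃ d, Relation.ReflTransGen G.dir v d ∧ d ∈ C := by
    intro i v hcv
    by_contra hno
    push_neg at hno
    exact hnb (Or.inr (Or.inr (Or.inl ⟨i, v, hcv, hno⟩)))
  have hnc : ∀ i v, NonColliderAt L i v → v ∉ C := by
    intro i v h hvC
    exact hnb (Or.inr (Or.inr (Or.inr ⟨i, v, h, hvC⟩)))
  have hopen : OpenW G T C L := by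
    refine chain'_of_index ?_
    intro i s t hs ht
    have htb : s.b = t.a := isWalk_adj hw hs ht
    constructor
    · intro hcoll
      exact hcol i s.b ⟨s, t, hs, ht, rfl, htb.symm, hcoll.1, hcoll.2⟩
    · intro hncoll
      have := hnc i s.b ⟨s, t, hs, ht, rfl, htb.symm, hncoll⟩
      intro hsT
      exact this (Or.inl (Or.inl hsT))
  have hCsub : C ⊆ T ∪ q ⁻¹' {Y} ∪ q ⁻¹' {Z} := by
    intro x hx
    rcases hx with (hx | hx) | hx
    · exact Or.inl (Or.inl hx)
    · exact Or.inl (Or.inr (hY' hx))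
    · exact Or.inr (hZ' hx)
  obtain ⟨a', b', L', ha', hb', hw', hop'⟩ :=
    reroute hCsub (cnt L) L y z le_rfl hw (by simp [hy]) (by simp [hz]) hopen
  exact micro_contra hDMG hMS hY hZ ha' hb' hw' hop'

end CoarseAux
/-! ## Conditional independence lemmas -/

namespace CoarseAux

open MeasureTheory ProbabilityTheory

variable {Ω : Type} {mΩ : MeasurableSpace Ω} [StandardBorelSpace Ω]
  {μ : Measure Ω} [IsFiniteMeasure μ]

/-- Indicator of a set. -/
noncomputable abbrev ind (s : Set Ω) : Ω → ℝ := s.indicator fun _ => (1 : ℝ)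

lemma ind_integrable {s : Set Ω} (hs : MeasurableSet[mΩ] s) : Integrable (ind s) μ :=
  (integrable_const 1).indicator hs

lemma indicator_eq_mul (t : Set Ω) (g : Ω → ℝ) :
    t.indicator g = fun x => g x * ind t x := by
  funext x
  by_cases hx : x ∈ t <;> simp [Set.indicator, hx]

/-- Conditional independence implies that further conditioning on `m₂` does not
change the conditional expectation of an `m₁`-indicator. -/
lemma condexp_sup_of_condIndep {m' m₁ m₂ : MeasurableSpace Ω}
    (hm' : m' ≤ mΩ) (hm₁ : m₁ ≤ mΩ) (hm₂ : m₂ ≤ mΩ)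
    (h : CondIndep m' m₁ m₂ hm' μ) {s : Set Ω} (hs : MeasurableSet[m₁] s) :
    μ[ind s | m₂ ⊔ m'] =ᵐ[μ] μ[ind s | m'] := by
  letI : MeasurableSpace Ω := mΩ
  have hsup : m₂ ⊔ m' ≤ mΩ := sup_le hm₂ hm'
  have hs' : MeasurableSet[mΩ] s := hm₁ s hs
  have hfint : Integrable (ind s) μ := ind_integrable hs'
  have hprod := (condIndep_iff m' m₁ m₂ hm' hm₁ hm₂ μ).mp h
  set p : Set (Set Ω) :=
    {u | ∃ t v, MeasurableSet[m₂] t ∧ MeasurableSet[m'] v ∧ u = t ∩ v} with hp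
  have h_eq : m₂ ⊔ m' = MeasurableSpace.generateFrom p := by
    refine le_antisymm (sup_le ?_ ?_) (MeasurableSpace.generateFrom_le ?_)
    · intro t ht
      exact MeasurableSpace.measurableSet_generateFrom
        ⟨t, Set.univ, ht, MeasurableSet.univ, (Set.inter_univ t).symm⟩
    · intro v hv
      exact MeasurableSpace.measurableSet_generateFrom
        ⟨Set.univ, v, MeasurableSet.univ, hv, (Set.univ_inter v).symm⟩
    · rintro u ⟨t, v, ht, hv, rfl⟩
      exact MeasurableSet.inter ((le_sup_left : m₂ ≤ m₂ ⊔ m') t ht)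
        ((le_sup_right : m' ≤ m₂ ⊔ m') v hv)
  have hpi : IsPiSystem p := by
    rintro u1 ⟨t1, v1, ht1, hv1, rfl⟩ u2 ⟨t2, v2, ht2, hv2, rfl⟩ _
    exact ⟨t1 ∩ t2, v1 ∩ v2, ht1.inter ht2, hv1.inter hv2,
      Set.inter_inter_inter_comm t1 v1 t2 v2⟩
  have key : ∀ A, MeasurableSet[m₂ ⊔ m'] A →
      ∫ x in A, (μ[ind s | m']) x ∂μ = ∫ x in A, ind s x ∂μ := by
    intro A hA
    refine MeasurableSpace.induction_on_inter (m := m₂ ⊔ m')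
      (C := fun A _ => ∫ x in A, (μ[ind s | m']) x ∂μ = ∫ x in A, ind s x ∂μ) (s := p)
      h_eq hpi ?_ ?_ ?_ ?_ A hA
    · simp
    · rintro u ⟨t, v, ht, hv, rfl⟩
      have hts : MeasurableSet[mΩ] t := hm₂ t ht
      have hvs : MeasurableSet[mΩ] v := hm' v hv
      have hCI : μ[ind (s ∩ t) | m'] =ᵐ[μ] (μ[ind s | m']) * (μ[ind t | m']) :=
        hprod s t hs ht
      -- right-hand side
      have hr : ∫ x in t ∩ v, ind s x ∂μ
          = ∫ x in v, ((μ[ind s | m']) * (μ[ind t | m'])) x ∂μ := by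
        rw [Set.inter_comm, ← setIntegral_indicator (μ := μ) hts]
        have h1 : t.indicator (ind s) = ind (t ∩ s) := Set.indicator_indicator t s _
        rw [h1, ← setIntegral_condExp hm' (ind_integrable (hts.inter hs')) hv]
        have h2 : ind (t ∩ s) = ind (s ∩ t) := by rw [Set.inter_comm]
        rw [h2]
        exact setIntegral_congr_ae hvs (hCI.mono fun x hx _ => hx)
      -- left-hand side
      have hl : ∫ x in t ∩ v, (μ[ind s | m']) x ∂μ
          = ∫ x in v, ((μ[ind s | m']) * (μ[ind t | m'])) x ∂μ := by
        rw [Set.inter_comm, ← setIntegral_indicator (μ := μ) hts]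
        rw [indicator_eq_mul t (μ[ind s | m'])]
        have hint : Integrable (fun x => (μ[ind s | m']) x * ind t x) μ := by
          rw [← indicator_eq_mul]
          exact Integrable.indicator (μ := μ) integrable_condExp hts
        rw [← setIntegral_condExp hm' hint hv]
        refine setIntegral_congr_ae hvs ?_
        have := condExp_mul_of_stronglyMeasurable_left (μ := μ) (m := m')
          stronglyMeasurable_condExp hint (ind_integrable hts)
        exact this.mono fun x hx _ => hx
      rw [hl, hr]
    · intro t ht hCt
      have hts : MeasurableSet[mΩ] t := hsup t ht
      have h1 := integral_add_compl (μ := μ) hts (integrable_condExp : Integrable (μ[ind s | m']) μ)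
      have h2 := integral_add_compl (μ := μ) hts hfint
      have h3 : ∫ x, (μ[ind s | m']) x ∂μ = ∫ x, ind s x ∂μ := integral_condExp hm'
      linarith
    · intro f hd hmeas hCf
      have hms : ∀ i, MeasurableSet[mΩ] (f i) := fun i => hsup _ (hmeas i)
      rw [integral_iUnion (μ := μ) hms hd integrable_condExp.integrableOn,
        integral_iUnion (μ := μ) hms hd hfint.integrableOn]
      exact tsum_congr hCf
  have hgm : AEStronglyMeasurable[m₂ ⊔ m'] (μ[ind s | m']) μ :=
    (stronglyMeasurable_condExp.mono (le_sup_right : m' ≤ m₂ ⊔ m')).aestronglyMeasurable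
  exact (ae_eq_condExp_of_forall_setIntegral_eq hsup hfint
    (fun A _ _ => integrable_condExp.integrableOn) (fun A hA _ => key A hA) hgm).symm

/-- Converse of `condexp_sup_of_condIndep`. -/
lemma condIndep_of_condexp_sup {m' m₁ m₂ : MeasurableSpace Ω}
    (hm' : m' ≤ mΩ) (hm₁ : m₁ ≤ mΩ) (hm₂ : m₂ ≤ mΩ)
    (h : ∀ s, MeasurableSet[m₁] s → μ[ind s | m₂ ⊔ m'] =ᵐ[μ] μ[ind s | m']) :
    CondIndep m' m₁ m₂ hm' μ := by
  letI : MeasurableSpace Ω := mΩ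
  have hsup : m₂ ⊔ m' ≤ mΩ := sup_le hm₂ hm'
  rw [condIndep_iff m' m₁ m₂ hm' hm₁ hm₂ μ]
  intro t1 t2 ht1 ht2
  have ht1' : MeasurableSet[mΩ] t1 := hm₁ t1 ht1
  have ht2' : MeasurableSet[mΩ] t2 := hm₂ t2 ht2
  have e1 : ind (t1 ∩ t2) = fun x => ind t2 x * ind t1 x := by
    funext x
    by_cases h1 : x ∈ t1 <;> by_cases h2 : x ∈ t2 <;>
      simp [Set.indicator, h1, h2]
  have hint21 : Integrable (fun x => ind t2 x * ind t1 x) μ := by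
    rw [← e1]; exact ind_integrable (ht1'.inter ht2')
  -- tower property
  have tower : μ[ind (t1 ∩ t2) | m'] =ᵐ[μ] μ[μ[ind (t1 ∩ t2) | m₂ ⊔ m'] | m'] :=
    (condExp_condExp_of_le (le_sup_right : m' ≤ m₂ ⊔ m') hsup).symm
  -- pull out the `m₂`-measurable indicator
  have pull1 : μ[ind (t1 ∩ t2) | m₂ ⊔ m'] =ᵐ[μ] (ind t2) * μ[ind t1 | m₂ ⊔ m'] := by
    have hmeas2 : StronglyMeasurable[m₂ ⊔ m'] (ind t2) :=
      stronglyMeasurable_const.indicator ((le_sup_left : m₂ ≤ m₂ ⊔ m') t2 ht2)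
    have := condExp_mul_of_stronglyMeasurable_left (μ := μ) (m := m₂ ⊔ m') hmeas2
      hint21 (ind_integrable ht1')
    calc μ[ind (t1 ∩ t2) | m₂ ⊔ m'] = μ[(fun x => ind t2 x * ind t1 x) | m₂ ⊔ m'] := by
          rw [← e1]
      _ =ᵐ[μ] (ind t2) * μ[ind t1 | m₂ ⊔ m'] := this
  have pull2 : (ind t2) * μ[ind t1 | m₂ ⊔ m'] =ᵐ[μ] (ind t2) * μ[ind t1 | m'] :=
    (h t1 ht1).mono fun x hx => by simp only [Pi.mul_apply, hx]
  have step : μ[ind (t1 ∩ t2) | m'] =ᵐ[μ] μ[(fun x => (μ[ind t1 | m']) x * ind t2 x) | m'] := by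
    refine tower.trans ?_
    refine (condExp_congr_ae (pull1.trans pull2)).trans ?_
    refine condExp_congr_ae (Filter.Eventually.of_forall fun x => ?_)
    simp [mul_comm]
  have hint : Integrable (fun x => (μ[ind t1 | m']) x * ind t2 x) μ := by
    rw [← indicator_eq_mul]
    exact Integrable.indicator (μ := μ) integrable_condExp ht2'
  have pull3 : μ[(fun x => (μ[ind t1 | m']) x * ind t2 x) | m']
      =ᵐ[μ] (μ[ind t1 | m']) * μ[ind t2 | m'] :=
    condExp_mul_of_stronglyMeasurable_left (μ := μ) (m := m') stronglyMeasurable_condExp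
      hint (ind_integrable ht2')
  exact step.trans pull3

/-- The contraction property of conditional independence. -/
lemma condIndep_contraction {m' m₁ m₂ m₃ m₄ m₅ : MeasurableSpace Ω}
    (hm' : m' ≤ mΩ) (hm₁ : m₁ ≤ mΩ) (hm₂ : m₂ ≤ mΩ) (hm₃ : m₃ ≤ mΩ)
    (hm₄ : m₄ ≤ mΩ) (heq4 : m₄ = m₂ ⊔ m')
    (h12 : CondIndep m' m₁ m₂ hm' μ) (h13 : CondIndep m₄ m₁ m₃ hm₄ μ)
    (heq5 : m₅ = m₂ ⊔ m₃) : CondIndep m' m₁ m₅ hm' μ := by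
  subst heq4
  subst heq5
  apply condIndep_of_condexp_sup hm' hm₁ (sup_le hm₂ hm₃)
  intro s hs
  have e : (m₂ ⊔ m₃) ⊔ m' = m₃ ⊔ (m₂ ⊔ m') := by
    rw [sup_comm m₂ m₃, sup_assoc]
  rw [e]
  exact (condexp_sup_of_condIndep (sup_le hm₂ hm') hm₁ hm₃ h13 hs).trans
    (condexp_sup_of_condIndep hm' hm₁ hm₂ h12 hs)

end CoarseAux
namespace CoarseAux

open MeasureTheory ProbabilityTheory

variable {Ω V : Type} {mΩ : MeasurableSpace Ω}

lemma genOf_le {X : V → Ω → ℝ} (hX : ∀ v, Measurable (X v)) (A : Set V) :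
    genOf X A ≤ mΩ :=
  iSup₂_le fun v _ => (hX v).comap_le

lemma genOf_union (X : V → Ω → ℝ) (A B : Set V) :
    genOf X (A ∪ B) = genOf X A ⊔ genOf X B := by
  simp only [genOf, iSup_union]

lemma genOf_empty (X : V → Ω → ℝ) : genOf X (∅ : Set V) = ⊥ := by
  simp [genOf]

end CoarseAux
open MeasureTheory ProbabilityTheory MixedGraph in
/-- If the micro-level pair `(G, μ)` is m-Markovian and the
partition `q` has finite groups, then the pair of the coarse graph and the
distribution is m-Markovian: for groups `Y`, `Z` and every set of groups `S` with
`Y ∉ S` and `Z ∉ S`, m-separation of `Y` and `Z` by `S` in the coarse graph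
implies mutual conditional independence of `Y` and `Z` given the union
`T = q ⁻¹' S`, and in particular also pairwise conditional independence given
`T`. -/
theorem coarse_mMarkov {Ω V I : Type} [MeasurableSpace Ω]
    [StandardBorelSpace Ω] [Fintype V] (μ : Measure Ω) [IsProbabilityMeasure μ]
    (X : V → Ω → ℝ) (hX : ∀ v, Measurable (X v)) (hpos : HasPositiveDensity μ X)
    (G : MixedGraph V) (hDMG : G.IsDMG) (hM : MMarkov G μ X)
    (q : V → I) (hq : Function.Surjective q) (hfin : ∀ Y : I, (q ⁻¹' {Y}).Finite) :
    ∀ (Y Z : I) (S : Set I), Y ∉ S → Z ∉ S → (G.coarse q).MSep S Y Z →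
      GroupCI μ X (q ⁻¹' {Y}) (q ⁻¹' {Z}) (q ⁻¹' S) ∧
      ∀ y z, q y = Y → q z = Z → GroupCI μ X {y} {z} (q ⁻¹' S) := by
  classical
  intro Y Z S hYS hZS hMS
  have key : ∀ (y z : V) (Y' Z' : Set V), q y = Y → q z = Z → Y' ⊆ q ⁻¹' {Y} →
      Z' ⊆ q ⁻¹' {Z} →
      CondIndep (genOf X (q ⁻¹' S ∪ Y' ∪ Z')) (genOf X {y}) (genOf X {z})
        (CoarseAux.genOf_le hX _) μ := by
    intro y z Y' Z' hy hz hY' hZ'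
    have hsep : G.MSep (q ⁻¹' S ∪ Y' ∪ Z') y z :=
      CoarseAux.micro_msep hDMG hMS hYS hZS hy hz hY' hZ'
    obtain ⟨hle, hci⟩ := hM y z _ hsep
    exact hci
  have lemA : ∀ (F : Finset V), (↑F : Set V) ⊆ q ⁻¹' {Y} → ∀ z, q z = Z →
      ∀ (Fz : Finset V), (↑Fz : Set V) ⊆ q ⁻¹' {Z} →
      CondIndep (genOf X (q ⁻¹' S ∪ ↑Fz)) (genOf X ↑F) (genOf X {z})
        (CoarseAux.genOf_le hX _) μ := by
    intro F
    induction F using Finset.induction_on with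
    | empty =>
      intro _ z hz Fz hFz
      refine condIndep_of_condIndep_of_le_left (condIndep_bot_left (genOf X {z})) ?_
      rw [Finset.coe_empty, CoarseAux.genOf_empty]
    | @insert y F hyF ih =>
      intro hins z hz Fz hFz
      have hyY : q y = Y := hins (by simp)
      have hF : (↑F : Set V) ⊆ q ⁻¹' {Y} := fun x hx => hins (by simp [hx])
      have h12 := (ih hF z hz Fz hFz).symm
      have h13 := (key y z ↑F ↑Fz hyY hz hF hFz).symm
      refine (CoarseAux.condIndep_contraction (CoarseAux.genOf_le hX _)
        (CoarseAux.genOf_le hX _) (CoarseAux.genOf_le hX _) (CoarseAux.genOf_le hX _)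
        (CoarseAux.genOf_le hX _) ?_ h12 h13 ?_).symm
      · rw [Set.union_right_comm, CoarseAux.genOf_union]
        exact sup_comm _ _
      · rw [Finset.coe_insert, Set.insert_eq, Set.union_comm, CoarseAux.genOf_union]
  have lemB : ∀ (Fz : Finset V), (↑Fz : Set V) ⊆ q ⁻¹' {Z} →
      CondIndep (genOf X (q ⁻¹' S)) (genOf X (q ⁻¹' {Y})) (genOf X ↑Fz)
        (CoarseAux.genOf_le hX _) μ := by
    intro Fz
    induction Fz using Finset.induction_on with
    | empty =>
      intro _
      refine condIndep_of_condIndep_of_le_right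
        (condIndep_bot_right (genOf X (q ⁻¹' {Y}))) ?_
      rw [Finset.coe_empty, CoarseAux.genOf_empty]
    | @insert z Fz hzF ih =>
      intro hins
      have hzZ : q z = Z := hins (by simp)
      have hFz : (↑Fz : Set V) ⊆ q ⁻¹' {Z} := fun x hx => hins (by simp [hx])
      have h12 := ih hFz
      have h13 : CondIndep (genOf X (q ⁻¹' S ∪ ↑Fz)) (genOf X (q ⁻¹' {Y}))
          (genOf X {z}) (CoarseAux.genOf_le hX _) μ := by
        have e : (↑(hfin Y).toFinset : Set V) = q ⁻¹' {Y} :=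
          Set.Finite.coe_toFinset _
        have h := lemA (hfin Y).toFinset (by rw [e]) z hzZ Fz hFz
        exact e ▸ h
      refine CoarseAux.condIndep_contraction (CoarseAux.genOf_le hX _)
        (CoarseAux.genOf_le hX _) (CoarseAux.genOf_le hX _) (CoarseAux.genOf_le hX _)
        (CoarseAux.genOf_le hX _) ?_ h12 h13 ?_
      · rw [CoarseAux.genOf_union]
        exact sup_comm _ _
      · rw [Finset.coe_insert, Set.insert_eq, Set.union_comm, CoarseAux.genOf_union]
  constructor
  · have e : (↑(hfin Z).toFinset : Set V) = q ⁻¹' {Z} := Set.Finite.coe_toFinset _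
    have h := lemB (hfin Z).toFinset (by rw [e])
    exact ⟨CoarseAux.genOf_le hX _, e ▸ h⟩
  · intro y z hy hz
    have h := key y z ∅ ∅ hy hz (by simp) (by simp)
    have e : q ⁻¹' S ∪ ∅ ∪ ∅ = q ⁻¹' S := by simp
    exact ⟨CoarseAux.genOf_le hX _, e ▸ h⟩
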